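/- Let g : ℝᵈ → ℝ ∪ {+∞} be convex and P ⊆ effdom(g) a convex set. If g is not strictly convex on P, then there exist two distinct points of P sharing a common extended subgradient. Conversely, if a linear extended f is an extended subgradient of g at two distinct points a, c ∈ P, then g is not strictly convex on P: indeed g(ρa + (1-ρ)c) = ρg(a) + (1-ρ)g(c) for all 0 < ρ < 1. -/

import Mathlib

def IsLinExt {E : Type*} [AddCommGroup E] [Module ℝ E] (f : E → EReal) : Prop :=
  (∀ (α : ℝ) (x : E), f (α • x) = (α : EReal) * f x) ∧
  (∀ x x' : E, ¬ ((f x = ⊤ ∧ f x' = ⊥) ∨ (f x = ⊥ ∧ f x' = ⊤)) →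
    f (x + x') = f x + f x')

lemma IsLinExt.zero_val {E : Type*} [AddCommGroup E] [Module ℝ E] {f : E → EReal}
    (hf : IsLinExt f) : f 0 = 0 := by
  have := hf.1 0 0
  simpa using this

lemma extend_slice {E : Type*} [AddCommGroup E] [Module ℝ E]
    (g : E → EReal) (x₀ : E) (ℓ : E →ₗ[ℝ] ℝ)
    (hsupp : ∀ x : E, g x ≠ ⊤ → ℓ (x - x₀) ≤ 0)
    (f₀ : (LinearMap.ker ℓ) → EReal) (hf₀ : IsLinExt f₀)
    (hsub : ∀ v : LinearMap.ker ℓ, g x₀ + f₀ v ≤ g (x₀ + (v : E))) :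
    ∃ f : E → EReal, IsLinExt f ∧ ∀ x, g x₀ + f (x - x₀) ≤ g x := by
  classical
  set f : E → EReal := fun x =>
    if h : ℓ x = 0 then f₀ ⟨x, h⟩ else if 0 < ℓ x then ⊤ else ⊥ with hfdef
  have hzer : ∀ (y : E) (h : ℓ y = 0), f y = f₀ ⟨y, h⟩ := by
    intro y h; simp [hfdef, h]
  have hpos : ∀ y : E, 0 < ℓ y → f y = ⊤ := by
    intro y h; simp [hfdef, ne_of_gt h, h]
  have hneg : ∀ y : E, ℓ y < 0 → f y = ⊥ := by
    intro y h; simp [hfdef, ne_of_lt h, not_lt.2 h.le, lt_asymm h]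
  have hflin : IsLinExt f := by
    constructor
    · intro α x
      rcases lt_trichotomy α 0 with hα | hα | hα
      · rcases lt_trichotomy (ℓ x) 0 with hx | hx | hx
        · rw [hneg x hx, hpos _ (by rw [map_smul, smul_eq_mul]; exact mul_pos_of_neg_of_neg hα hx),
            EReal.coe_mul_bot_of_neg hα]
        · have h' : ℓ (α • x) = 0 := by rw [map_smul, smul_eq_mul, hx, mul_zero]
          rw [hzer x hx, hzer _ h']
          have : (⟨α • x, h'⟩ : LinearMap.ker ℓ) = α • ⟨x, hx⟩ := rfl
          rw [this, hf₀.1]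
        · rw [hpos x hx, hneg _ (by rw [map_smul, smul_eq_mul]; exact mul_neg_of_neg_of_pos hα hx),
            EReal.coe_mul_top_of_neg hα]
      · subst hα
        simp only [zero_smul, EReal.coe_zero, EReal.zero_mul]
        rw [hzer 0 (map_zero ℓ)]
        have : (⟨(0 : E), map_zero ℓ⟩ : LinearMap.ker ℓ) = 0 := rfl
        rw [this, hf₀.zero_val]
      · rcases lt_trichotomy (ℓ x) 0 with hx | hx | hx
        · rw [hneg x hx, hneg _ (by rw [map_smul, smul_eq_mul]; exact mul_neg_of_pos_of_neg hα hx),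
            EReal.coe_mul_bot_of_pos hα]
        · have h' : ℓ (α • x) = 0 := by rw [map_smul, smul_eq_mul, hx, mul_zero]
          rw [hzer x hx, hzer _ h']
          have : (⟨α • x, h'⟩ : LinearMap.ker ℓ) = α • ⟨x, hx⟩ := rfl
          rw [this, hf₀.1]
        · rw [hpos x hx, hpos _ (by rw [map_smul, smul_eq_mul]; exact mul_pos hα hx),
            EReal.coe_mul_top_of_pos hα]
    · intro x x' hleg
      rcases lt_trichotomy (ℓ x) 0 with hx | hx | hx <;>
        rcases lt_trichotomy (ℓ x') 0 with hx' | hx' | hx'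
      · rw [hneg x hx, hneg x' hx', hneg _ (by rw [map_add]; linarith), EReal.bot_add]
      · rw [hneg x hx, hneg _ (by rw [map_add]; linarith), EReal.bot_add]
      · exact absurd (Or.inr ⟨hneg x hx, hpos x' hx'⟩) hleg
      · rw [hneg x' hx', hneg _ (by rw [map_add]; linarith), EReal.add_bot]
      · have hsum : ℓ (x + x') = 0 := by rw [map_add, hx, hx', add_zero]
        rw [hzer x hx, hzer x' hx', hzer _ hsum] at *
        have : (⟨x + x', hsum⟩ : LinearMap.ker ℓ) = ⟨x, hx⟩ + ⟨x', hx'⟩ := rfl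
        rw [this, hf₀.2 _ _ hleg]
      · rw [hpos x' hx', hpos _ (by rw [map_add]; linarith)]
        rw [hzer x hx] at hleg ⊢
        have hb : f₀ ⟨x, hx⟩ ≠ ⊥ := by
          intro hb; exact hleg (Or.inr ⟨hb, hpos x' hx'⟩)
        rw [EReal.add_top_of_ne_bot hb]
      · exact absurd (Or.inl ⟨hpos x hx, hneg x' hx'⟩) hleg
      · rw [hpos x hx, hpos _ (by rw [map_add]; linarith)]
        rw [hzer x' hx'] at hleg ⊢
        have hb : f₀ ⟨x', hx'⟩ ≠ ⊥ := by
          intro hb; exact hleg (Or.inl ⟨hpos x hx, hb⟩)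
        rw [EReal.top_add_of_ne_bot hb]
      · rw [hpos x hx, hpos x' hx', hpos _ (by rw [map_add]; linarith), EReal.top_add_top]
  refine ⟨f, hflin, fun x => ?_⟩
  rcases lt_trichotomy (ℓ (x - x₀)) 0 with hx | hx | hx
  · rw [hneg _ hx, EReal.add_bot]; exact bot_le
  · rw [hzer _ hx]
    have := hsub ⟨x - x₀, hx⟩
    simpa using this
  · by_cases hgx : g x = ⊤
    · rw [hgx]; exact le_top
    · exact absurd (hsupp x hgx) (not_le.2 hx)

open Module

set_option maxHeartbeats 2000000 in
lemma subgrad_exists : ∀ (n : ℕ) (E : Type) [NormedAddCommGroup E] [NormedSpace ℝ E]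
    [FiniteDimensional ℝ E], finrank ℝ E ≤ n → ∀ (g : E → EReal), (∀ x, g x ≠ ⊥) →
    Convex ℝ {p : E × ℝ | g p.1 ≤ (p.2 : EReal)} → ∀ x₀ : E, g x₀ ≠ ⊤ →
    ∃ f : E → EReal, IsLinExt f ∧ ∀ x, g x₀ + f (x - x₀) ≤ g x := by
  intro n
  induction n with
  | zero =>
    intro E _ _ _ hrank g hbot hconv x₀ hx₀
    have hsub : Subsingleton E := by
      rw [← finrank_zero_iff (R := ℝ)]; omega
    refine ⟨fun _ => 0, ⟨fun α x => by simp, fun x x' _ => by simp⟩, fun x => ?_⟩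
    rw [Subsingleton.elim x x₀, add_zero]
  | succ n IH =>
    intro E _ _ _ hrank g hbot hconv x₀ hx₀
    -- the recursion step along a supporting hyperplane
    have step : ∀ ℓ : E →ₗ[ℝ] ℝ, ℓ ≠ 0 → (∀ x : E, g x ≠ ⊤ → ℓ (x - x₀) ≤ 0) →
        ∃ f : E → EReal, IsLinExt f ∧ ∀ x, g x₀ + f (x - x₀) ≤ g x := by
      intro ℓ hℓ hsupp
      set F := LinearMap.ker ℓ with hF
      have hrkF : finrank ℝ F ≤ n := by
        have hlt : finrank ℝ F < finrank ℝ E :=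
          Submodule.finrank_lt (fun h => hℓ (LinearMap.ker_eq_top.1 h))
        omega
      set G : F → EReal := fun v => g (x₀ + (v : E)) with hG
      have hGconv : Convex ℝ {p : F × ℝ | G p.1 ≤ (p.2 : EReal)} := by
        rintro ⟨v, s⟩ hv ⟨w, t⟩ hw a b ha hb hab
        have := hconv (x := (x₀ + (v : E), s)) hv (y := (x₀ + (w : E), t)) hw ha hb hab
        simp only [Prod.smul_mk, Prod.mk_add_mk, Set.mem_setOf_eq, smul_eq_mul] at this ⊢
        have harg : a • (x₀ + (v : E)) + b • (x₀ + (w : E)) = x₀ + ((a • v + b • w : F) : E) := by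
          push_cast
          rw [smul_add, smul_add]
          rw [show a • x₀ + a • (v:E) + (b • x₀ + b • (w:E))
              = (a+b) • x₀ + (a • (v:E) + b • (w:E)) by rw [add_smul]; abel, hab, one_smul]
        rw [harg] at this
        exact this
      have hG0 : G 0 ≠ ⊤ := by simpa [hG] using hx₀
      obtain ⟨f₀, hf₀, hsub₀⟩ := IH F hrkF G (fun v => hbot _) hGconv 0 hG0
      refine extend_slice g x₀ ℓ hsupp f₀ hf₀ fun v => ?_
      have := hsub₀ v
      simpa [hG] using this
    by_cases hV : Submodule.span ℝ ((fun x => x - x₀) '' {x | g x ≠ ⊤}) = ⊤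
    · -- full-dimensional case : separation
      set epi := {p : E × ℝ | g p.1 ≤ (p.2 : EReal)} with hepi
      set r := (g x₀).toReal with hrdef
      have hr : g x₀ = (r : EReal) := (EReal.coe_toReal hx₀ (hbot x₀)).symm
      have hx₀epi : (x₀, r) ∈ epi := by rw [hepi, Set.mem_setOf_eq, hr]
      have h01W : ∀ t : ℝ, r ≤ t → (x₀, t) ∈ epi := by
        intro t ht
        rw [hepi, Set.mem_setOf_eq, hr]
        exact_mod_cast ht
      have hspan : affineSpan ℝ epi = ⊤ := by
        rw [AffineSubspace.affineSpan_eq_top_iff_vectorSpan_eq_top_of_nonempty ℝ (E × ℝ) (E × ℝ) ⟨_, hx₀epi⟩]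
        set W := vectorSpan ℝ epi with hW
        have h01 : ((0, 1) : E × ℝ) ∈ W := by
          have := vsub_mem_vectorSpan ℝ (h01W (r+1) (by linarith)) hx₀epi
          simpa [Prod.ext_iff] using this
        have hD : ∀ x, g x ≠ ⊤ → ((x - x₀, (0:ℝ)) : E × ℝ) ∈ W := by
          intro x hx
          have hgx : g x = (((g x).toReal : ℝ) : EReal) := (EReal.coe_toReal hx (hbot x)).symm
          have hmem : (x, (g x).toReal) ∈ epi := by
            show g x ≤ (((g x).toReal : ℝ) : EReal)
            exact hgx.le
          have h1 : ((x - x₀, (g x).toReal - r) : E × ℝ) ∈ W :=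
            vsub_mem_vectorSpan ℝ hmem hx₀epi
          have h2 := W.sub_mem h1 (W.smul_mem ((g x).toReal - r) h01)
          simpa [Prod.ext_iff] using h2
        rw [eq_top_iff]
        rintro ⟨v, t⟩ -
        have hv0 : ((v, (0:ℝ)) : E × ℝ) ∈ W := by
          have hsle : Submodule.span ℝ ((fun x => x - x₀) '' {x | g x ≠ ⊤})
              ≤ W.comap (LinearMap.inl ℝ E ℝ) := by
            rw [Submodule.span_le]
            rintro _ ⟨x, hx, rfl⟩
            exact hD x hx
          have hvmem : v ∈ Submodule.span ℝ ((fun x => x - x₀) '' {x | g x ≠ ⊤}) := by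
            rw [hV]; trivial
          simpa using hsle hvmem
        have := W.add_mem hv0 (W.smul_mem t h01)
        simpa [Prod.ext_iff] using this
      have hconvepi : Convex ℝ epi := hconv
      have hint : (interior epi).Nonempty :=
        (hconvepi.interior_nonempty_iff_affineSpan_eq_top).2 hspan
      have hpt : ((x₀, r) : E × ℝ) ∉ interior epi := by
        intro h
        rcases Metric.isOpen_iff.1 isOpen_interior _ h with ⟨ε, hε, hball⟩
        have hmem : ((x₀, r - ε/2) : E × ℝ) ∈ interior epi := by
          apply hball
          rw [Metric.mem_ball, Prod.dist_eq]
          simp [Real.dist_eq, abs_of_nonneg, hε.le, abs_of_nonpos]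
          linarith
        have hle := interior_subset hmem
        rw [hepi, Set.mem_setOf_eq, hr] at hle
        have := EReal.coe_le_coe_iff.1 hle
        linarith
      obtain ⟨φ, hφ⟩ := geometric_hahn_banach_open_point (hconvepi.interior) isOpen_interior hpt
      set c := φ (x₀, r) with hc
      have hle : ∀ z ∈ epi, φ z ≤ c := by
        intro z hz
        obtain ⟨w, hw⟩ := hint
        by_contra hgt
        push_neg at hgt
        have key : ∀ θ : ℝ, 0 < θ → θ ≤ 1 → θ * φ w + (1 - θ) * φ z < c := by
          intro θ h1 h2
          have hmem := hconvepi.combo_interior_self_mem_interior (b := 1 - θ) hw hz h1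
            (by linarith) (by ring)
          have := hφ _ hmem
          simpa [map_add, map_smul, smul_eq_mul] using this
        have h1 := key 1 one_pos le_rfl
        have hM : φ z - φ w > 0 := by linarith
        set θ := (φ z - c) / (2 * (φ z - φ w)) with hθ
        have hθpos : 0 < θ := by rw [hθ]; exact div_pos (by linarith) (by linarith)
        have hθle : θ ≤ 1 := by
          rw [hθ, div_le_one (by linarith)]
          linarith
        have h2 := key θ hθpos hθle
        have : θ * (φ z - φ w) = (φ z - c) / 2 := by
          rw [hθ]; field_simp
        nlinarith
      set A : E →ₗ[ℝ] ℝ := φ.toLinearMap.comp (LinearMap.inl ℝ E ℝ) with hA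
      set s := φ (0, 1) with hs
      have hdec : ∀ (x : E) (t : ℝ), φ (x, t) = A x + t * s := by
        intro x t
        have h1 : ((x, t) : E × ℝ) = (x, 0) + t • (0, 1) := by
          simp [Prod.ext_iff]
        rw [h1, map_add, map_smul, smul_eq_mul]
        rfl
      have hsle : s ≤ 0 := by
        have h1 := hle _ (h01W (r + 1) (by linarith))
        rw [hdec] at h1
        rw [hc, hdec] at h1
        linarith
      rcases lt_or_eq_of_le hsle with hslt | hseq
      · -- non-vertical separating hyperplane: finite subgradient
        refine ⟨fun y => ((A y / (-s) : ℝ) : EReal), ⟨?_, ?_⟩, ?_⟩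
        · intro α x
          show ((A (α • x) / -s : ℝ) : EReal) = (α : EReal) * ((A x / -s : ℝ) : EReal)
          rw [← EReal.coe_mul]
          norm_cast
          rw [map_smul, smul_eq_mul]
          ring
        · intro x x' _
          show ((A (x + x') / -s : ℝ) : EReal) = ((A x / -s : ℝ) : EReal) + ((A x' / -s : ℝ) : EReal)
          rw [← EReal.coe_add]
          norm_cast
          rw [map_add]
          ring
        · intro x
          by_cases hgx : g x = ⊤
          · rw [hgx]; exact le_top
          · have hgxr : g x = (((g x).toReal : ℝ) : EReal) := (EReal.coe_toReal hgx (hbot x)).symm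
            set tx := (g x).toReal with htx
            have hmem : (x, tx) ∈ epi := by rw [hepi, Set.mem_setOf_eq, hgxr]
            have h1 := hle _ hmem
            rw [hdec] at h1
            rw [hc, hdec] at h1
            rw [hr, hgxr, ← EReal.coe_add, EReal.coe_le_coe_iff]
            rw [map_sub]
            have hkey : (A x - A x₀) / (-s) ≤ tx - r := by
              rw [div_le_iff₀ (by linarith : (0:ℝ) < -s)]
              nlinarith
            linarith
      · -- vertical supporting hyperplane: recurse
        apply step A
        · obtain ⟨⟨w1, w2⟩, hw⟩ := hint
          have hwlt := hφ _ hw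
          have e1 : φ (w1, w2) = A w1 + w2 * s := hdec w1 w2
          have e2 : c = A x₀ + r * s := by rw [hc, hdec]
          intro h0
          rw [e1, e2, h0, hseq] at hwlt
          simp at hwlt
        · intro x hgx
          have hgxr : g x = (((g x).toReal : ℝ) : EReal) := (EReal.coe_toReal hgx (hbot x)).symm
          have hmem : (x, (g x).toReal) ∈ epi := by
            show g x ≤ (((g x).toReal : ℝ) : EReal)
            exact hgxr.le
          have h1 := hle _ hmem
          have e2 : c = A x₀ + r * s := by rw [hc, hdec]
          rw [hdec, e2, hseq] at h1
          rw [map_sub]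
          linarith
    · -- low-dimensional case : a functional vanishing on the span
      obtain ⟨ℓ, hℓ0, hker⟩ := Submodule.exists_dual_map_eq_bot_of_lt_top
        (lt_top_iff_ne_top.2 hV) inferInstance
      apply step ℓ hℓ0
      intro x hx
      have hmem : x - x₀ ∈ Submodule.span ℝ ((fun x => x - x₀) '' {x | g x ≠ ⊤}) :=
        Submodule.subset_span ⟨x, hx, rfl⟩
      have : ℓ (x - x₀) ∈ (Submodule.span ℝ ((fun x => x - x₀) '' {x | g x ≠ ⊤})).map ℓ :=
        Submodule.mem_map_of_mem hmem
      rw [hker] at this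
      simp only [Submodule.mem_bot] at this
      rw [this]

def IsAffExt {E : Type*} [AddCommGroup E] [Module ℝ E] (h : E → EReal) : Prop :=
  ∃ (f : E → EReal) (x₀ : E) (β : ℝ), IsLinExt f ∧ ∀ x, h x = f (x - x₀) + (β : EReal)

theorem stmt_15 (d : ℕ) (g : (Fin d → ℝ) → EReal) (hbot : ∀ x, g x ≠ ⊥)
    (hconv : Convex ℝ {p : (Fin d → ℝ) × ℝ | g p.1 ≤ (p.2 : EReal)})
    (P : Set (Fin d → ℝ)) (hP : Convex ℝ P) (hPdom : ∀ x ∈ P, g x ≠ ⊤) :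
    -- not strictly convex on P → two distinct points of P share an extended subgradient
    ((¬ ∀ x ∈ P, ∀ x' ∈ P, x ≠ x' → ∀ ρ : ℝ, 0 < ρ → ρ < 1 →
        g (ρ • x + (1 - ρ) • x') < (ρ : EReal) * g x + ((1 - ρ : ℝ) : EReal) * g x') →
      ∃ a ∈ P, ∃ c ∈ P, a ≠ c ∧ ∃ f : (Fin d → ℝ) → EReal, IsLinExt f ∧
        (∀ x, g a + f (x - a) ≤ g x) ∧ (∀ x, g c + f (x - c) ≤ g x)) ∧
    -- conversely, a shared extended subgradient forces affineness along the segment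
    (∀ a ∈ P, ∀ c ∈ P, a ≠ c → ∀ f : (Fin d → ℝ) → EReal, IsLinExt f →
      (∀ x, g a + f (x - a) ≤ g x) → (∀ x, g c + f (x - c) ≤ g x) →
      ∀ ρ : ℝ, 0 < ρ → ρ < 1 →
        g (ρ • a + (1 - ρ) • c) = (ρ : EReal) * g a + ((1 - ρ : ℝ) : EReal) * g c) := by
  constructor
  · -- Part 1
    intro hns
    push_neg at hns
    obtain ⟨a, ha, c, hc, hac, ρ, hρ0, hρ1, hge⟩ := hns
    set m := ρ • a + (1 - ρ) • c with hm
    have hga : g a = (((g a).toReal : ℝ) : EReal) := (EReal.coe_toReal (hPdom a ha) (hbot a)).symm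
    have hgc : g c = (((g c).toReal : ℝ) : EReal) := (EReal.coe_toReal (hPdom c hc) (hbot c)).symm
    set ga := (g a).toReal with hgadef
    set gc := (g c).toReal with hgcdef
    set gm := ρ * ga + (1 - ρ) * gc with hgmdef
    have hcomb := hconv (show ((a, ga) : (Fin d → ℝ) × ℝ) ∈ _ from hga.le)
      (show ((c, gc) : (Fin d → ℝ) × ℝ) ∈ _ from hgc.le) hρ0.le
      (by linarith : (0:ℝ) ≤ 1 - ρ) (by ring)
    simp only [Prod.smul_mk, Prod.mk_add_mk, Set.mem_setOf_eq, smul_eq_mul] at hcomb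
    rw [← hm] at hcomb
    -- hcomb : g m ≤ ↑gm
    rw [hga, hgc, ← EReal.coe_mul, ← EReal.coe_mul, ← EReal.coe_add] at hge
    have hmeq : g m = ((gm : ℝ) : EReal) := le_antisymm hcomb hge
    have hm_ne_top : g m ≠ ⊤ := by rw [hmeq]; exact EReal.coe_ne_top _
    obtain ⟨f, hf, hsub⟩ := subgrad_exists (Module.finrank ℝ (Fin d → ℝ)) (Fin d → ℝ)
      le_rfl g hbot hconv m hm_ne_top
    set u := a - c with hu
    have hau : a - m = (1 - ρ) • u := by rw [hm, hu]; module
    have hcu : c - m = (-ρ) • u := by rw [hm, hu]; module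
    have hfu_ne_top : f u ≠ ⊤ := by
      intro hT
      have h1 := hsub a
      rw [hau, hf.1 (1 - ρ) u, hT, EReal.coe_mul_top_of_pos (by linarith), hmeq,
        EReal.add_top_of_ne_bot (EReal.coe_ne_bot _), hga] at h1
      exact EReal.coe_ne_top _ (top_le_iff.1 h1)
    have hfu_ne_bot : f u ≠ ⊥ := by
      intro hB
      have h1 := hsub c
      rw [hcu, hf.1 (-ρ) u, hB, EReal.coe_mul_bot_of_neg (by linarith), hmeq,
        EReal.add_top_of_ne_bot (EReal.coe_ne_bot _), hgc] at h1
      exact EReal.coe_ne_top _ (top_le_iff.1 h1)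
    have hb : f u = (((f u).toReal : ℝ) : EReal) := (EReal.coe_toReal hfu_ne_top hfu_ne_bot).symm
    set b := (f u).toReal with hbdef
    have e1 : gm + (1 - ρ) * b ≤ ga := by
      have h1 := hsub a
      rw [hau, hf.1 (1 - ρ) u, hb, hmeq, hga, ← EReal.coe_mul, ← EReal.coe_add,
        EReal.coe_le_coe_iff] at h1
      exact h1
    have e2 : gm + (-ρ) * b ≤ gc := by
      have h1 := hsub c
      rw [hcu, hf.1 (-ρ) u, hb, hmeq, hgc, ← EReal.coe_mul, ← EReal.coe_add,
        EReal.coe_le_coe_iff] at h1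
      exact h1
    have key1 : ga = gm + (1 - ρ) * b := by
      apply le_antisymm
      · have h2' := mul_le_mul_of_nonneg_left e2 (by linarith : (0:ℝ) ≤ 1 - ρ)
        have h3 : ρ * ga ≤ ρ * (gm + (1 - ρ) * b) := by rw [hgmdef] at h2' ⊢; nlinarith
        exact le_of_mul_le_mul_left h3 hρ0
      · linarith
    have key2 : gc = gm + (-ρ) * b := by
      apply le_antisymm
      · have h1' := mul_le_mul_of_nonneg_left e1 hρ0.le
        have h3 : (1 - ρ) * gc ≤ (1 - ρ) * (gm + (-ρ) * b) := by
          rw [hgmdef] at h1' ⊢; nlinarith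
        exact le_of_mul_le_mul_left h3 (by linarith)
      · linarith
    refine ⟨a, ha, c, hc, hac, f, hf, ?_, ?_⟩
    · intro x
      have hx : x - m = (x - a) + (1 - ρ) • u := by rw [hm, hu]; module
      have hval : f ((1 - ρ) • u) = ((((1 - ρ) * b : ℝ)) : EReal) := by
        rw [hf.1, hb, ← EReal.coe_mul]
      have hleg : ¬ ((f (x - a) = ⊤ ∧ f ((1 - ρ) • u) = ⊥) ∨
          (f (x - a) = ⊥ ∧ f ((1 - ρ) • u) = ⊤)) := by
        rintro (⟨-, h⟩ | ⟨-, h⟩) <;> rw [hval] at h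
        · exact EReal.coe_ne_bot _ h
        · exact EReal.coe_ne_top _ h
      have hstep : f (x - m) = f (x - a) + ((((1 - ρ) * b : ℝ)) : EReal) := by
        rw [hx, hf.2 _ _ hleg, hval]
      have h1 := hsub x
      rw [hstep, hmeq] at h1
      have hga' : g a = (((gm + (1 - ρ) * b : ℝ)) : EReal) := by rw [hga, key1]
      rw [hga', EReal.coe_add]
      calc ((gm : ℝ) : EReal) + (((1 - ρ) * b : ℝ) : EReal) + f (x - a)
          = ((gm : ℝ) : EReal) + (f (x - a) + (((1 - ρ) * b : ℝ) : EReal)) := by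
            rw [add_assoc, add_comm ((((1 - ρ) * b : ℝ)) : EReal) (f (x - a))]
        _ ≤ g x := h1
    · intro x
      have hx : x - m = (x - c) + (-ρ) • u := by rw [hm, hu]; module
      have hval : f ((-ρ) • u) = ((((-ρ) * b : ℝ)) : EReal) := by
        rw [hf.1, hb, ← EReal.coe_mul]
      have hleg : ¬ ((f (x - c) = ⊤ ∧ f ((-ρ) • u) = ⊥) ∨
          (f (x - c) = ⊥ ∧ f ((-ρ) • u) = ⊤)) := by
        rintro (⟨-, h⟩ | ⟨-, h⟩) <;> rw [hval] at h
        · exact EReal.coe_ne_bot _ h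
        · exact EReal.coe_ne_top _ h
      have hstep : f (x - m) = f (x - c) + ((((-ρ) * b : ℝ)) : EReal) := by
        rw [hx, hf.2 _ _ hleg, hval]
      have h1 := hsub x
      rw [hstep, hmeq] at h1
      have hgc' : g c = (((gm + (-ρ) * b : ℝ)) : EReal) := by rw [hgc, key2]
      rw [hgc', EReal.coe_add]
      calc ((gm : ℝ) : EReal) + (((-ρ) * b : ℝ) : EReal) + f (x - c)
          = ((gm : ℝ) : EReal) + (f (x - c) + (((-ρ) * b : ℝ) : EReal)) := by
            rw [add_assoc, add_comm ((((-ρ) * b : ℝ)) : EReal) (f (x - c))]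
        _ ≤ g x := h1
  · -- Part 2
    intro a ha c hc hac f hf hsga hsgc ρ hρ0 hρ1
    set m := ρ • a + (1 - ρ) • c with hm
    have hga : g a = (((g a).toReal : ℝ) : EReal) := (EReal.coe_toReal (hPdom a ha) (hbot a)).symm
    have hgc : g c = (((g c).toReal : ℝ) : EReal) := (EReal.coe_toReal (hPdom c hc) (hbot c)).symm
    set ga := (g a).toReal with hgadef
    set gc := (g c).toReal with hgcdef
    have hcomb := hconv (show ((a, ga) : (Fin d → ℝ) × ℝ) ∈ _ from hga.le)
      (show ((c, gc) : (Fin d → ℝ) × ℝ) ∈ _ from hgc.le) hρ0.le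
      (by linarith : (0:ℝ) ≤ 1 - ρ) (by ring)
    simp only [Prod.smul_mk, Prod.mk_add_mk, Set.mem_setOf_eq, smul_eq_mul] at hcomb
    have hm_ne_top : g m ≠ ⊤ := fun h => by
      rw [h] at hcomb; exact EReal.coe_ne_top _ (top_le_iff.1 hcomb)
    have hgm : g m = (((g m).toReal : ℝ) : EReal) := (EReal.coe_toReal hm_ne_top (hbot m)).symm
    set gm := (g m).toReal with hgmdef
    set u := c - a with hu
    have hma : m - a = (1 - ρ) • u := by rw [hm, hu]; module
    have hmc : m - c = (-ρ) • u := by rw [hm, hu]; module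
    have hfu_ne_top : f u ≠ ⊤ := by
      intro hT
      have h1 := hsga m
      rw [hma, hf.1 (1 - ρ) u, hT, EReal.coe_mul_top_of_pos (by linarith),
        EReal.add_top_of_ne_bot (hbot a), hgm] at h1
      exact EReal.coe_ne_top _ (top_le_iff.1 h1)
    have hfu_ne_bot : f u ≠ ⊥ := by
      intro hB
      have h1 := hsgc m
      rw [hmc, hf.1 (-ρ) u, hB, EReal.coe_mul_bot_of_neg (by linarith),
        EReal.add_top_of_ne_bot (hbot c), hgm] at h1
      exact EReal.coe_ne_top _ (top_le_iff.1 h1)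
    have hb : f u = (((f u).toReal : ℝ) : EReal) := (EReal.coe_toReal hfu_ne_top hfu_ne_bot).symm
    set b := (f u).toReal with hbdef
    have e1 : ga + (1 - ρ) * b ≤ gm := by
      have h1 := hsga m
      rw [hma, hf.1 (1 - ρ) u, hb, hga, hgm, ← EReal.coe_mul, ← EReal.coe_add,
        EReal.coe_le_coe_iff] at h1
      exact h1
    have e2 : gc + (-ρ) * b ≤ gm := by
      have h1 := hsgc m
      rw [hmc, hf.1 (-ρ) u, hb, hgc, hgm, ← EReal.coe_mul, ← EReal.coe_add,
        EReal.coe_le_coe_iff] at h1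
      exact h1
    have e3 : gm ≤ ρ * ga + (1 - ρ) * gc := by
      rw [hgm, EReal.coe_le_coe_iff] at hcomb
      exact hcomb
    have heq : gm = ρ * ga + (1 - ρ) * gc := by
      apply le_antisymm e3
      nlinarith [mul_le_mul_of_nonneg_left e1 hρ0.le,
        mul_le_mul_of_nonneg_left e2 (by linarith : (0:ℝ) ≤ 1 - ρ)]
    rw [hga, hgc, hgm, ← EReal.coe_mul, ← EReal.coe_mul, ← EReal.coe_add,
      EReal.coe_eq_coe_iff]
    exact heq
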